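/- Let Q and P̃ be transition kernels of an absorbing Markov game over 𝒮 ∪ {s†} such that Q is (1/H)-multiplicatively accurate to P̃. Let Π_A × Π_B be a set of Markov policy pairs, let π be a probability distribution over Π_A × Π_B, and define the mixture occupancies V^π(1_{h,s,a,b}, ·) := 𝔼_{(μ,ν)∼π}[ V^{μ,ν}(1_{h,s,a,b}, ·) ]. Suppose that sup_{(μ',ν') ∈ Π_A×Π_B} ∑_{h=1}^H ∑_{(s,a,b) ∈ 𝒮×𝒜×ℬ} V^{μ',ν'}(1_{h,s,a,b},Q) / V^π(1_{h,s,a,b},Q) ≤ H·S·A·B, where terms with zero numerator are interpreted as 0. Then sup_{(μ',ν') ∈ Π_A×Π_B} ∑_{h=1}^H ∑_{(s,a,b)} V^{μ',ν'}(1_{h,s,a,b},P̃) / V^π(1_{h,s,a,b},P̃) ≤ 12·H·S·A·B, with the same convention. -/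

import Mathlib

/-- Value-to-go of a Markov-policy pair `(μ, ν)` in a finite two-player zero-sum Markov
game with transition kernel `P` and reward `r`: `Vfuel P r μ ν n h s` is the expected sum
of the rewards collected in the `n` steps `h, h+1, …, h+n−1`, starting from state `s` at
step `h`, the two actions being drawn independently from `μ h s` and `ν h s`. -/
noncomputable def Vfuel {S A B : Type*} [Fintype S] [Fintype A] [Fintype B]
    (P : ℕ → S → A → B → S → ℝ) (r : ℕ → S → A → B → ℝ)
    (μ : ℕ → S → A → ℝ) (ν : ℕ → S → B → ℝ) : ℕ → ℕ → S → ℝ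
  | 0, _, _ => 0
  | n + 1, h, s =>
      ∑ a, ∑ b, μ h s a * ν h s b *
        (r h s a b + ∑ s', P h s a b s' * Vfuel P r μ ν n (h + 1) s')

/-- `val H P r μ ν s₁ = V^{μ,ν}(r, P)`: the expected total reward
`𝔼_{μ×ν}[∑_{h=1}^H r_h(s_h,a_h,b_h)]` over the horizon `H`, starting at `s₁` at step 1. -/
noncomputable def val {S A B : Type*} [Fintype S] [Fintype A] [Fintype B]
    (H : ℕ) (P : ℕ → S → A → B → S → ℝ) (r : ℕ → S → A → B → ℝ)
    (μ : ℕ → S → A → ℝ) (ν : ℕ → S → B → ℝ) (s₁ : S) : ℝ :=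
  Vfuel P r μ ν H 1 s₁

/-- `P` is a valid transition kernel over the steps `h ∈ [H] = {1, …, H}`. -/
def IsKernel {S A B : Type*} [Fintype S] (H : ℕ) (P : ℕ → S → A → B → S → ℝ) : Prop :=
  ∀ h ∈ Finset.Icc 1 H, ∀ s a b, (∀ s', 0 ≤ P h s a b s') ∧ ∑ s', P h s a b s' = 1

/-- `μ` is a valid Markov policy over the steps `h ∈ [H] = {1, …, H}`. -/
def IsPolicy {S A : Type*} [Fintype A] (H : ℕ) (μ : ℕ → S → A → ℝ) : Prop :=
  ∀ h ∈ Finset.Icc 1 H, ∀ s, (∀ a, 0 ≤ μ h s a) ∧ ∑ a, μ h s a = 1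

/-- The indicator reward `1_{h,s,a,b}`, equal to `1` at `(h,s,a,b)` and `0` elsewhere;
`val H P (ind h s a b) μ ν s₁` is the probability of visiting `(s,a,b)` at step `h`. -/
noncomputable def ind {S A B : Type*} [DecidableEq S] [DecidableEq A] [DecidableEq B]
    (h : ℕ) (s : S) (a : A) (b : B) : ℕ → S → A → B → ℝ :=
  fun h' s' a' b' => if h' = h ∧ s' = s ∧ a' = a ∧ b' = b then 1 else 0

section auxlem
variable {S A B : Type*} [Fintype S] [Fintype A] [Fintype B]

lemma Vfuel_succ (P : ℕ → S → A → B → S → ℝ) (r : ℕ → S → A → B → ℝ) (μ ν) (n h : ℕ) (s : S) :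
    Vfuel P r μ ν (n+1) h s = ∑ a, ∑ b, μ h s a * ν h s b *
        (r h s a b + ∑ s', P h s a b s' * Vfuel P r μ ν n (h + 1) s') := rfl

lemma Vfuel_nonneg (H : ℕ) (P : ℕ → S → A → B → S → ℝ) (r : ℕ → S → A → B → ℝ) (μ ν)
    (hP : ∀ h ∈ Finset.Icc 1 H, ∀ s a b s', 0 ≤ P h s a b s')
    (hr : ∀ h s a b, 0 ≤ r h s a b)
    (hμ : ∀ h ∈ Finset.Icc 1 H, ∀ s a, 0 ≤ μ h s a)
    (hν : ∀ h ∈ Finset.Icc 1 H, ∀ s b, 0 ≤ ν h s b) :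
    ∀ n k, 1 ≤ k → k + n ≤ H + 1 → ∀ s, 0 ≤ Vfuel P r μ ν n k s := by
  intro n
  induction n with
  | zero => intro k _ _ s; exact le_of_eq rfl
  | succ n ih =>
    intro k hk1 hkH s
    rw [Vfuel_succ]
    have hkIcc : k ∈ Finset.Icc 1 H := Finset.mem_Icc.2 ⟨hk1, by omega⟩
    refine Finset.sum_nonneg fun a _ => Finset.sum_nonneg fun b _ => ?_
    refine mul_nonneg (mul_nonneg (hμ k hkIcc s a) (hν k hkIcc s b)) ?_
    exact add_nonneg (hr _ _ _ _) (Finset.sum_nonneg fun s' _ =>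
      mul_nonneg (hP k hkIcc s a b s') (ih (k+1) (by omega) (by omega) s'))

lemma Vfuel_none (H : ℕ) (P : ℕ → Option S → A → B → Option S → ℝ)
    (r : ℕ → Option S → A → B → ℝ) (μ ν)
    (hK : IsKernel H P) (habs : ∀ h ∈ Finset.Icc 1 H, ∀ a b, P h none a b none = 1)
    (hrnone : ∀ h a b, r h none a b = 0) :
    ∀ n k, 1 ≤ k → k + n ≤ H + 1 → Vfuel P r μ ν n k none = 0 := by
  intro n
  induction n with
  | zero => intro k _ _; rfl
  | succ n ih =>
    intro k hk1 hkH
    have hkIcc : k ∈ Finset.Icc 1 H := Finset.mem_Icc.2 ⟨hk1, by omega⟩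
    rw [Vfuel_succ]
    refine Finset.sum_eq_zero fun a _ => Finset.sum_eq_zero fun b _ => ?_
    have hz : ∀ s' : S, P k none a b (some s') = 0 := by
      have hsum := (hK k hkIcc none a b).2
      have hnn := (hK k hkIcc none a b).1
      rw [Fintype.sum_option, habs k hkIcc a b] at hsum
      have h0 : ∑ s' : S, P k none a b (some s') = 0 := by linarith
      intro s'
      have := (Finset.sum_eq_zero_iff_of_nonneg (fun x _ => hnn (some x))).1 h0 s'
        (Finset.mem_univ s')
      exact this
    have : ∑ s', P k none a b s' * Vfuel P r μ ν n (k+1) s' = 0 := by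
      refine Finset.sum_eq_zero fun t _ => ?_
      cases t with
      | none => rw [ih (k+1) (by omega) (by omega), mul_zero]
      | some s' => rw [hz s', zero_mul]
    rw [this, hrnone, add_zero, mul_zero]

lemma Vfuel_le_upper (H : ℕ) (hH : 1 ≤ H)
    (Q Ptil : ℕ → Option S → A → B → Option S → ℝ)
    (r : ℕ → Option S → A → B → ℝ) (μ ν)
    (hQ : IsKernel H Q) (hPtil : IsKernel H Ptil)
    (hQabs : ∀ h ∈ Finset.Icc 1 H, ∀ a b, Q h none a b none = 1)
    (hPtilabs : ∀ h ∈ Finset.Icc 1 H, ∀ a b, Ptil h none a b none = 1)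
    (hacc : ∀ h ∈ Finset.Icc 1 H, ∀ (s : S) (a : A) (b : B) (s' : S),
      Ptil h (some s) a b (some s') ≤ (1 + 1 / (H : ℝ)) * Q h (some s) a b (some s'))
    (hr : ∀ h s a b, 0 ≤ r h s a b) (hrnone : ∀ h a b, r h none a b = 0)
    (hμ : IsPolicy H μ) (hν : IsPolicy H ν) :
    ∀ n k, 1 ≤ k → k + n ≤ H + 1 → ∀ s : S,
      Vfuel Ptil r μ ν n k (some s) ≤
        (1 + 1/(H:ℝ))^(n-1) * Vfuel Q r μ ν n k (some s) := by
  have hH0 : (0:ℝ) < H := by exact_mod_cast hH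
  have hθ0 : (0:ℝ) ≤ 1/(H:ℝ) := by positivity
  have hb1 : (1:ℝ) ≤ 1 + 1/(H:ℝ) := by linarith
  intro n
  induction n with
  | zero => intro k _ _ s; simp [Vfuel]
  | succ n ih =>
    intro k hk1 hkH s
    have hkIcc : k ∈ Finset.Icc 1 H := Finset.mem_Icc.2 ⟨hk1, by omega⟩
    rw [Vfuel_succ, Vfuel_succ, Nat.add_sub_cancel, Finset.mul_sum]
    refine Finset.sum_le_sum fun a _ => ?_
    rw [Finset.mul_sum]
    refine Finset.sum_le_sum fun b _ => ?_
    rw [mul_left_comm]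
    refine mul_le_mul_of_nonneg_left ?_
      (mul_nonneg ((hμ k hkIcc (some s)).1 a) ((hν k hkIcc (some s)).1 b))
    -- inner inequality
    have hVQnn : ∀ t, 0 ≤ Vfuel Q r μ ν n (k+1) t :=
      Vfuel_nonneg H Q r μ ν (fun h hh s a b s' => (hQ h hh s a b).1 s') hr
        (fun h hh s => (hμ h hh s).1) (fun h hh s => (hν h hh s).1) n (k+1)
        (by omega) (by omega)
    have hVPnn : ∀ t, 0 ≤ Vfuel Ptil r μ ν n (k+1) t :=
      Vfuel_nonneg H Ptil r μ ν (fun h hh s a b s' => (hPtil h hh s a b).1 s') hr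
        (fun h hh s => (hμ h hh s).1) (fun h hh s => (hν h hh s).1) n (k+1)
        (by omega) (by omega)
    have hkey : ∑ t, Ptil k (some s) a b t * Vfuel Ptil r μ ν n (k+1) t ≤
        (1 + 1/(H:ℝ))^n * ∑ t, Q k (some s) a b t * Vfuel Q r μ ν n (k+1) t := by
      rw [Fintype.sum_option, Fintype.sum_option,
        Vfuel_none H Ptil r μ ν hPtil hPtilabs hrnone n (k+1) (by omega) (by omega),
        Vfuel_none H Q r μ ν hQ hQabs hrnone n (k+1) (by omega) (by omega)]
      simp only [mul_zero, zero_add]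
      rw [Finset.mul_sum]
      refine Finset.sum_le_sum fun s' _ => ?_
      cases n with
      | zero => simp [Vfuel]
      | succ m =>
        calc Ptil k (some s) a b (some s') * Vfuel Ptil r μ ν (m+1) (k+1) (some s')
            ≤ ((1 + 1/(H:ℝ)) * Q k (some s) a b (some s')) *
              ((1 + 1/(H:ℝ))^m * Vfuel Q r μ ν (m+1) (k+1) (some s')) := by
              refine mul_le_mul (hacc k hkIcc s a b s') ?_ (hVPnn (some s')) ?_
              · have := ih (k+1) (by omega) (by omega) s'
                simpa using this
              · exact mul_nonneg (by positivity) ((hQ k hkIcc (some s) a b).1 (some s'))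
          _ = (1 + 1/(H:ℝ))^(m+1) *
              (Q k (some s) a b (some s') * Vfuel Q r μ ν (m+1) (k+1) (some s')) := by
              ring
    have hX : 0 ≤ ∑ t, Q k (some s) a b t * Vfuel Q r μ ν n (k+1) t :=
      Finset.sum_nonneg fun t _ => mul_nonneg ((hQ k hkIcc (some s) a b).1 t) (hVQnn t)
    have hp1 : (1:ℝ) ≤ (1 + 1/(H:ℝ))^n := one_le_pow₀ hb1
    calc r k (some s) a b + ∑ t, Ptil k (some s) a b t * Vfuel Ptil r μ ν n (k+1) t
        ≤ r k (some s) a b + (1 + 1/(H:ℝ))^n *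
          ∑ t, Q k (some s) a b t * Vfuel Q r μ ν n (k+1) t := by linarith
      _ ≤ (1 + 1/(H:ℝ))^n *
          (r k (some s) a b + ∑ t, Q k (some s) a b t * Vfuel Q r μ ν n (k+1) t) := by
          have hrn := hr k (some s) a b
          nlinarith [mul_le_mul_of_nonneg_left hp1 hrn]

lemma Vfuel_le_lower (H : ℕ) (hH : 1 ≤ H)
    (Q Ptil : ℕ → Option S → A → B → Option S → ℝ)
    (r : ℕ → Option S → A → B → ℝ) (μ ν)
    (hQ : IsKernel H Q) (hPtil : IsKernel H Ptil)
    (hQabs : ∀ h ∈ Finset.Icc 1 H, ∀ a b, Q h none a b none = 1)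
    (hPtilabs : ∀ h ∈ Finset.Icc 1 H, ∀ a b, Ptil h none a b none = 1)
    (hacc : ∀ h ∈ Finset.Icc 1 H, ∀ (s : S) (a : A) (b : B) (s' : S),
      (1 - 1 / (H : ℝ)) * Q h (some s) a b (some s') ≤ Ptil h (some s) a b (some s'))
    (hr : ∀ h s a b, 0 ≤ r h s a b) (hrnone : ∀ h a b, r h none a b = 0)
    (hμ : IsPolicy H μ) (hν : IsPolicy H ν) :
    ∀ n k, 1 ≤ k → k + n ≤ H + 1 → ∀ s : S,
      (1 - 1/(H:ℝ))^(n-1) * Vfuel Q r μ ν n k (some s) ≤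
        Vfuel Ptil r μ ν n k (some s) := by
  have hH0 : (0:ℝ) < H := by exact_mod_cast hH
  have hθ0 : (0:ℝ) ≤ 1/(H:ℝ) := by positivity
  have hθ1 : 1/(H:ℝ) ≤ 1 := by
    rw [div_le_one hH0]; exact_mod_cast hH
  have hb0 : (0:ℝ) ≤ 1 - 1/(H:ℝ) := by linarith
  have hb1 : 1 - 1/(H:ℝ) ≤ 1 := by linarith
  intro n
  induction n with
  | zero => intro k _ _ s; simp [Vfuel]
  | succ n ih =>
    intro k hk1 hkH s
    have hkIcc : k ∈ Finset.Icc 1 H := Finset.mem_Icc.2 ⟨hk1, by omega⟩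
    rw [Vfuel_succ, Vfuel_succ, Nat.add_sub_cancel, Finset.mul_sum]
    refine Finset.sum_le_sum fun a _ => ?_
    rw [Finset.mul_sum]
    refine Finset.sum_le_sum fun b _ => ?_
    rw [mul_left_comm]
    refine mul_le_mul_of_nonneg_left ?_
      (mul_nonneg ((hμ k hkIcc (some s)).1 a) ((hν k hkIcc (some s)).1 b))
    have hVQnn : ∀ t, 0 ≤ Vfuel Q r μ ν n (k+1) t :=
      Vfuel_nonneg H Q r μ ν (fun h hh s a b s' => (hQ h hh s a b).1 s') hr
        (fun h hh s => (hμ h hh s).1) (fun h hh s => (hν h hh s).1) n (k+1)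
        (by omega) (by omega)
    have hVPnn : ∀ t, 0 ≤ Vfuel Ptil r μ ν n (k+1) t :=
      Vfuel_nonneg H Ptil r μ ν (fun h hh s a b s' => (hPtil h hh s a b).1 s') hr
        (fun h hh s => (hμ h hh s).1) (fun h hh s => (hν h hh s).1) n (k+1)
        (by omega) (by omega)
    have hkey : (1 - 1/(H:ℝ))^n * ∑ t, Q k (some s) a b t * Vfuel Q r μ ν n (k+1) t ≤
        ∑ t, Ptil k (some s) a b t * Vfuel Ptil r μ ν n (k+1) t := by
      rw [Fintype.sum_option, Fintype.sum_option,
        Vfuel_none H Ptil r μ ν hPtil hPtilabs hrnone n (k+1) (by omega) (by omega),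
        Vfuel_none H Q r μ ν hQ hQabs hrnone n (k+1) (by omega) (by omega)]
      simp only [mul_zero, zero_add]
      rw [Finset.mul_sum]
      refine Finset.sum_le_sum fun s' _ => ?_
      cases n with
      | zero => simp [Vfuel]
      | succ m =>
        calc (1 - 1/(H:ℝ))^(m+1) *
              (Q k (some s) a b (some s') * Vfuel Q r μ ν (m+1) (k+1) (some s'))
            = ((1 - 1/(H:ℝ)) * Q k (some s) a b (some s')) *
              ((1 - 1/(H:ℝ))^m * Vfuel Q r μ ν (m+1) (k+1) (some s')) := by ring
          _ ≤ Ptil k (some s) a b (some s') * Vfuel Ptil r μ ν (m+1) (k+1) (some s') := by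
              refine mul_le_mul (hacc k hkIcc s a b s') ?_ ?_ ((hPtil k hkIcc (some s) a b).1 _)
              · have := ih (k+1) (by omega) (by omega) s'
                simpa using this
              · exact mul_nonneg (by positivity) (hVQnn (some s'))
    have hp1 : (1 - 1/(H:ℝ))^n ≤ 1 := pow_le_one₀ hb0 hb1
    have hrn := hr k (some s) a b
    have h2 : (1 - 1/(H:ℝ))^n * r k (some s) a b ≤ r k (some s) a b := by
      nlinarith
    calc (1 - 1/(H:ℝ))^n *
          (r k (some s) a b + ∑ t, Q k (some s) a b t * Vfuel Q r μ ν n (k+1) t)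
        = (1 - 1/(H:ℝ))^n * r k (some s) a b +
          (1 - 1/(H:ℝ))^n * ∑ t, Q k (some s) a b t * Vfuel Q r μ ν n (k+1) t := by ring
      _ ≤ r k (some s) a b + ∑ t, Ptil k (some s) a b t * Vfuel Ptil r μ ν n (k+1) t := by
          linarith


lemma one_add_inv_pow_le_exp (m : ℕ) (hm : 1 ≤ m) : ((1:ℝ) + 1/m)^m ≤ Real.exp 1 := by
  have h0 : (0:ℝ) < m := by exact_mod_cast hm
  have h1 : (1:ℝ) + 1/m ≤ Real.exp (1/m) := by
    have := Real.add_one_le_exp (1/(m:ℝ)); linarith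
  calc ((1:ℝ)+1/m)^m ≤ (Real.exp (1/m))^m := pow_le_pow_left₀ (by positivity) h1 m
    _ = Real.exp ((m:ℝ) * (1/m)) := (Real.exp_nat_mul _ m).symm
    _ = Real.exp 1 := by rw [mul_one_div, div_self h0.ne']

lemma upper_const_le (H : ℕ) (hH : 1 ≤ H) : ((1:ℝ) + 1/H)^(H-1) ≤ 3 := by
  have h0 : (0:ℝ) < H := by exact_mod_cast hH
  have hb1 : (1:ℝ) ≤ 1 + 1/H := by
    have : (0:ℝ) ≤ 1/H := by positivity
    linarith
  have h3 : Real.exp 1 ≤ 3 := by have := Real.exp_one_lt_d9; linarith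
  calc ((1:ℝ) + 1/H)^(H-1) ≤ ((1:ℝ) + 1/H)^H := pow_le_pow_right₀ hb1 (Nat.sub_le H 1)
    _ ≤ Real.exp 1 := one_add_inv_pow_le_exp H hH
    _ ≤ 3 := h3

lemma lower_const_ge (H : ℕ) (hH : 1 ≤ H) : (1/4 : ℝ) ≤ (1 - 1/(H:ℝ))^(H-1) := by
  rcases eq_or_lt_of_le hH with h1 | h2
  · rw [← h1]; norm_num
  · have hH2 : 2 ≤ H := h2
    set m := H - 1 with hm
    have hm1 : 1 ≤ m := by omega
    have hHm : H = m + 1 := by omega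
    have hmc : (0:ℝ) < m := by exact_mod_cast hm1
    have hHc : (H:ℝ) = (m:ℝ) + 1 := by rw [hHm]; push_cast; ring
    have hprod : (1 - 1/(H:ℝ)) * ((1:ℝ) + 1/m) = 1 := by
      rw [hHc]; field_simp; ring
    have hxpos : (0:ℝ) < (1:ℝ) + 1/m := by positivity
    have hx4 : ((1:ℝ) + 1/m)^m ≤ 4 := by
      have := one_add_inv_pow_le_exp m hm1
      have h3 : Real.exp 1 ≤ 4 := by have := Real.exp_one_lt_d9; linarith
      linarith
    have hxp : (0:ℝ) < ((1:ℝ) + 1/m)^m := by positivity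
    have hprodpow : (1 - 1/(H:ℝ))^m * ((1:ℝ) + 1/m)^m = 1 := by
      rw [← mul_pow, hprod, one_pow]
    have : (1 - 1/(H:ℝ))^m = (((1:ℝ) + 1/m)^m)⁻¹ := by
      field_simp at hprodpow ⊢
      linarith [hprodpow]
    rw [this, show (1/4 : ℝ) = 4⁻¹ by norm_num,
      inv_le_inv₀ (by norm_num : (0:ℝ) < 4) hxp]
    exact hx4

end auxlem

/-- Transfer of uniform coverage from the intermediate kernel `Q` to the
absorbing kernel `P̃` it approximates: on an absorbing Markov game over `Option S`
(`none` = `s†`), if `Q` is `(1/H)`-multiplicatively accurate to `P̃`, and the mixture `π`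
(a finitely supported distribution `w` over policy pairs `(μs i, νs i) ∈ Π_A × Π_B`)
satisfies `∑_{h,s,a,b} V^{μ',ν'}(1_{h,s,a,b},Q) / V^π(1_{h,s,a,b},Q) ≤ H·S·A·B` for all
`(μ',ν') ∈ Π_A × Π_B`, then
`∑_{h,s,a,b} V^{μ',ν'}(1_{h,s,a,b},P̃) / V^π(1_{h,s,a,b},P̃) ≤ 12·H·S·A·B` for all
`(μ',ν') ∈ Π_A × Π_B` (terms with zero numerator count as `0`). -/


theorem stmt7 {S A B : Type*} [Fintype S] [Fintype A] [Fintype B]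
    [DecidableEq S] [DecidableEq A] [DecidableEq B]
    (H : ℕ) (hH : 1 ≤ H)
    (Q Ptil : ℕ → Option S → A → B → Option S → ℝ)
    (hQ : IsKernel H Q) (hPtil : IsKernel H Ptil)
    (hQabs : ∀ h ∈ Finset.Icc 1 H, ∀ a b, Q h none a b none = 1)
    (hPtilabs : ∀ h ∈ Finset.Icc 1 H, ∀ a b, Ptil h none a b none = 1)
    (hacc : ∀ h ∈ Finset.Icc 1 H, ∀ (s : S) (a : A) (b : B) (s' : S),
      (1 - 1 / (H : ℝ)) * Q h (some s) a b (some s') ≤ Ptil h (some s) a b (some s') ∧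
        Ptil h (some s) a b (some s') ≤ (1 + 1 / (H : ℝ)) * Q h (some s) a b (some s'))
    (PiA : Set (ℕ → Option S → A → ℝ)) (PiB : Set (ℕ → Option S → B → ℝ))
    (hPiA : ∀ μ' ∈ PiA, IsPolicy H μ') (hPiB : ∀ ν' ∈ PiB, IsPolicy H ν')
    (idx : Type*) [Fintype idx]
    (w : idx → ℝ) (hw0 : ∀ i, 0 ≤ w i) (hw1 : ∑ i, w i = 1)
    (μs : idx → ℕ → Option S → A → ℝ) (νs : idx → ℕ → Option S → B → ℝ)
    (hmem : ∀ i, μs i ∈ PiA ∧ νs i ∈ PiB)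
    (s₁ : S)
    (hcover : ∀ μ' ∈ PiA, ∀ ν' ∈ PiB,
      ∑ h ∈ Finset.Icc 1 H, ∑ s : S, ∑ a : A, ∑ b : B,
          val H Q (ind h (some s) a b) μ' ν' (some s₁) /
            (∑ i, w i * val H Q (ind h (some s) a b) (μs i) (νs i) (some s₁))
        ≤ (H : ℝ) * Fintype.card S * Fintype.card A * Fintype.card B) :
    ∀ μ' ∈ PiA, ∀ ν' ∈ PiB,
      ∑ h ∈ Finset.Icc 1 H, ∑ s : S, ∑ a : A, ∑ b : B,
          val H Ptil (ind h (some s) a b) μ' ν' (some s₁) /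
            (∑ i, w i * val H Ptil (ind h (some s) a b) (μs i) (νs i) (some s₁))
        ≤ 12 * (H : ℝ) * Fintype.card S * Fintype.card A * Fintype.card B := by
  intro μ' hμ' ν' hν'
  have hind0 : ∀ (h : ℕ) (s : S) (a : A) (b : B), ∀ (h' : ℕ) (t : Option S) (a' : A) (b' : B),
      0 ≤ ind h (some s) a b h' t a' b' := by
    intro h s a b h' t a' b'
    unfold ind; split <;> norm_num
  have hindn : ∀ (h : ℕ) (s : S) (a : A) (b : B), ∀ (h' : ℕ) (a' : A) (b' : B),
      ind h (some s) a b h' none a' b' = 0 := by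
    intro h s a b h' a' b'; simp [ind]
  -- generic val facts
  have keyQ0 : ∀ (μ : ℕ → Option S → A → ℝ) (ν : ℕ → Option S → B → ℝ),
      IsPolicy H μ → IsPolicy H ν → ∀ (h : ℕ) (s : S) (a : A) (b : B),
      0 ≤ val H Q (ind h (some s) a b) μ ν (some s₁) := by
    intro μ ν hμ hν h s a b
    exact Vfuel_nonneg H Q _ μ ν (fun h' hh s' a' b' t => (hQ h' hh s' a' b').1 t)
      (hind0 h s a b) (fun h' hh t => (hμ h' hh t).1) (fun h' hh t => (hν h' hh t).1)
      H 1 le_rfl (by omega) (some s₁)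
  have keyUp : ∀ (μ : ℕ → Option S → A → ℝ) (ν : ℕ → Option S → B → ℝ),
      IsPolicy H μ → IsPolicy H ν → ∀ (h : ℕ) (s : S) (a : A) (b : B),
      val H Ptil (ind h (some s) a b) μ ν (some s₁) ≤
        3 * val H Q (ind h (some s) a b) μ ν (some s₁) := by
    intro μ ν hμ hν h s a b
    have h1 := Vfuel_le_upper H hH Q Ptil (ind h (some s) a b) μ ν hQ hPtil hQabs hPtilabs
      (fun h' hh s' a' b' t => (hacc h' hh s' a' b' t).2) (hind0 h s a b) (hindn h s a b)
      hμ hν H 1 le_rfl (by omega) s₁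
    have h2 := upper_const_le H hH
    have h3 := keyQ0 μ ν hμ hν h s a b
    calc val H Ptil (ind h (some s) a b) μ ν (some s₁)
        ≤ ((1:ℝ) + 1/H)^(H-1) * val H Q (ind h (some s) a b) μ ν (some s₁) := h1
      _ ≤ 3 * val H Q (ind h (some s) a b) μ ν (some s₁) :=
          mul_le_mul_of_nonneg_right h2 h3
  have keyLo : ∀ (μ : ℕ → Option S → A → ℝ) (ν : ℕ → Option S → B → ℝ),
      IsPolicy H μ → IsPolicy H ν → ∀ (h : ℕ) (s : S) (a : A) (b : B),
      (1/4 : ℝ) * val H Q (ind h (some s) a b) μ ν (some s₁) ≤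
        val H Ptil (ind h (some s) a b) μ ν (some s₁) := by
    intro μ ν hμ hν h s a b
    have h1 := Vfuel_le_lower H hH Q Ptil (ind h (some s) a b) μ ν hQ hPtil hQabs hPtilabs
      (fun h' hh s' a' b' t => (hacc h' hh s' a' b' t).1) (hind0 h s a b) (hindn h s a b)
      hμ hν H 1 le_rfl (by omega) s₁
    have h2 := lower_const_ge H hH
    have h3 := keyQ0 μ ν hμ hν h s a b
    calc (1/4 : ℝ) * val H Q (ind h (some s) a b) μ ν (some s₁)
        ≤ ((1:ℝ) - 1/H)^(H-1) * val H Q (ind h (some s) a b) μ ν (some s₁) :=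
          mul_le_mul_of_nonneg_right h2 h3
      _ ≤ val H Ptil (ind h (some s) a b) μ ν (some s₁) := h1
  -- per-term bound
  have main : ∀ (h : ℕ) (s : S) (a : A) (b : B),
      val H Ptil (ind h (some s) a b) μ' ν' (some s₁) /
          (∑ i, w i * val H Ptil (ind h (some s) a b) (μs i) (νs i) (some s₁)) ≤
        12 * (val H Q (ind h (some s) a b) μ' ν' (some s₁) /
          (∑ i, w i * val H Q (ind h (some s) a b) (μs i) (νs i) (some s₁))) := by
    intro h s a b
    set NQ := val H Q (ind h (some s) a b) μ' ν' (some s₁) with hNQ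
    set N := val H Ptil (ind h (some s) a b) μ' ν' (some s₁) with hN
    set DQ := ∑ i, w i * val H Q (ind h (some s) a b) (μs i) (νs i) (some s₁) with hDQ
    set D := ∑ i, w i * val H Ptil (ind h (some s) a b) (μs i) (νs i) (some s₁) with hD
    have hμ'P := hPiA μ' hμ'
    have hν'P := hPiB ν' hν'
    have hpi : ∀ i, IsPolicy H (μs i) ∧ IsPolicy H (νs i) :=
      fun i => ⟨hPiA _ (hmem i).1, hPiB _ (hmem i).2⟩
    have hNQ0 : 0 ≤ NQ := keyQ0 μ' ν' hμ'P hν'P h s a b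
    have hN3 : N ≤ 3 * NQ := keyUp μ' ν' hμ'P hν'P h s a b
    have hDQ0 : 0 ≤ DQ := Finset.sum_nonneg fun i _ =>
      mul_nonneg (hw0 i) (keyQ0 _ _ (hpi i).1 (hpi i).2 h s a b)
    have hDlow : (1/4 : ℝ) * DQ ≤ D := by
      rw [hDQ, hD, Finset.mul_sum]
      refine Finset.sum_le_sum fun i _ => ?_
      rw [mul_left_comm]
      exact mul_le_mul_of_nonneg_left (keyLo _ _ (hpi i).1 (hpi i).2 h s a b) (hw0 i)
    have hDhigh : D ≤ 3 * DQ := by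
      rw [hDQ, hD, Finset.mul_sum]
      refine Finset.sum_le_sum fun i _ => ?_
      rw [mul_left_comm]
      exact mul_le_mul_of_nonneg_left (keyUp _ _ (hpi i).1 (hpi i).2 h s a b) (hw0 i)
    rcases eq_or_lt_of_le hDQ0 with hDQz | hDQpos
    · have hDz : D = 0 := le_antisymm (by rw [← hDQz] at hDhigh; linarith) (by linarith)
      rw [hDz, ← hDQz, div_zero, div_zero, mul_zero]
    · have hDpos : (0:ℝ) < D := lt_of_lt_of_le (by linarith) hDlow
      have step : N / D ≤ (3 * NQ) / ((1/4 : ℝ) * DQ) :=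
        div_le_div₀ (by linarith) hN3 (by linarith) hDlow
      have heq : (3 * NQ) / ((1/4 : ℝ) * DQ) = 12 * (NQ / DQ) := by
        have hDQne : DQ ≠ 0 := ne_of_gt hDQpos
        field_simp
        ring
      linarith [step, heq ▸ step]
  -- sum it up
  have hsum : ∑ h ∈ Finset.Icc 1 H, ∑ s : S, ∑ a : A, ∑ b : B,
      val H Ptil (ind h (some s) a b) μ' ν' (some s₁) /
        (∑ i, w i * val H Ptil (ind h (some s) a b) (μs i) (νs i) (some s₁))
      ≤ 12 * ∑ h ∈ Finset.Icc 1 H, ∑ s : S, ∑ a : A, ∑ b : B,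
      val H Q (ind h (some s) a b) μ' ν' (some s₁) /
        (∑ i, w i * val H Q (ind h (some s) a b) (μs i) (νs i) (some s₁)) := by
    rw [Finset.mul_sum]
    refine Finset.sum_le_sum fun h _ => ?_
    rw [Finset.mul_sum]
    refine Finset.sum_le_sum fun s _ => ?_
    rw [Finset.mul_sum]
    refine Finset.sum_le_sum fun a _ => ?_
    rw [Finset.mul_sum]
    exact Finset.sum_le_sum fun b _ => main h s a b
  have hc := hcover μ' hμ' ν' hν'
  calc ∑ h ∈ Finset.Icc 1 H, ∑ s : S, ∑ a : A, ∑ b : B,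
      val H Ptil (ind h (some s) a b) μ' ν' (some s₁) /
        (∑ i, w i * val H Ptil (ind h (some s) a b) (μs i) (νs i) (some s₁))
      ≤ 12 * ∑ h ∈ Finset.Icc 1 H, ∑ s : S, ∑ a : A, ∑ b : B,
        val H Q (ind h (some s) a b) μ' ν' (some s₁) /
          (∑ i, w i * val H Q (ind h (some s) a b) (μs i) (νs i) (some s₁)) := hsum
    _ ≤ 12 * ((H : ℝ) * Fintype.card S * Fintype.card A * Fintype.card B) := by
        linarith
    _ = 12 * (H : ℝ) * Fintype.card S * Fintype.card A * Fintype.card B := by ring
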